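/- Assume that λ vanishes identically on some interval (−∞, T], that ω₀ = 1, and that σ is fine-tuned so that m + 2·(κ²/n²)·σ·ρ₀ = 0. Then every brane scale function f satisfies lim_{τ→0⁻} f′(τ)²·e^{2n·f(τ)} = (κ²/n²)·ρ₀², and for every τ with f(τ) ≤ T the identity f″ + n·f′² = (2Λ/n)·e^{2f} − n·κ̃ + (κ²/n²)·(n+1)·σ²·e^{2f} holds; consequently f satisfies the ARW conditions with constant γ̃ = n and mass m̃ = (κ²/n²)·ρ₀². -/

import Mathlib

namespace ARWAux

inductive Adm (f : ℝ → ℝ) (b : ℝ) (Ω : Set ℝ) : ℕ → (ℝ → ℝ) → Prop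
  | e2 : Adm f b Ω 0 (fun τ => Real.exp (2 * f τ))
  | em : Adm f b Ω 2 (fun τ => Real.exp (-b * f τ))
  | fp : Adm f b Ω 1 (deriv f)
  | one : Adm f b Ω 0 (fun _ => (1 : ℝ))
  | smul (c : ℝ) {k : ℕ} {g : ℝ → ℝ} : Adm f b Ω k g → Adm f b Ω k (fun τ => c * g τ)
  | add {k : ℕ} {g h : ℝ → ℝ} : Adm f b Ω k g → Adm f b Ω k h →
      Adm f b Ω k (fun τ => g τ + h τ)
  | mul {k l : ℕ} {g h : ℝ → ℝ} : Adm f b Ω k g → Adm f b Ω l h →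
      Adm f b Ω (k + l) (fun τ => g τ * h τ)
  | up {k : ℕ} {g : ℝ → ℝ} : Adm f b Ω k g → Adm f b Ω (k + 1) g
  | congr {k : ℕ} {g h : ℝ → ℝ} : Adm f b Ω k g → (∀ τ ∈ Ω, g τ = h τ) → Adm f b Ω k h

theorem Adm.cast {f : ℝ → ℝ} {b : ℝ} {Ω : Set ℝ} {k l : ℕ} {g : ℝ → ℝ}
    (h : Adm f b Ω k g) (e : k = l) : Adm f b Ω l g := e ▸ h

theorem Adm.bound {f : ℝ → ℝ} {b : ℝ} {Ω : Set ℝ} {K : ℝ} (hK : 0 ≤ K)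
    (hQ : ∀ τ ∈ Ω, Real.exp (-b * f τ) ≤ K * (deriv f τ) ^ 2)
    (h1 : ∀ τ ∈ Ω, 1 ≤ |deriv f τ|)
    (hB : ∀ τ ∈ Ω, Real.exp (2 * f τ) ≤ 1)
    {k : ℕ} {g : ℝ → ℝ} (hg : Adm f b Ω k g) :
    ∃ c : ℝ, 0 ≤ c ∧ ∀ τ ∈ Ω, |g τ| ≤ c * |deriv f τ| ^ k := by
  induction hg with
  | e2 =>
      refine ⟨1, zero_le_one, fun τ hτ => ?_⟩
      rw [abs_of_pos (Real.exp_pos _)]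
      simpa using hB τ hτ
  | em =>
      refine ⟨K, hK, fun τ hτ => ?_⟩
      rw [abs_of_pos (Real.exp_pos _)]
      calc Real.exp (-b * f τ) ≤ K * (deriv f τ) ^ 2 := hQ τ hτ
        _ = K * |deriv f τ| ^ 2 := by rw [sq_abs]
  | fp =>
      refine ⟨1, zero_le_one, fun τ hτ => ?_⟩
      simp
  | one =>
      refine ⟨1, zero_le_one, fun τ hτ => ?_⟩
      simp
  | smul c hg ih =>
      obtain ⟨cg, hcg0, hcg⟩ := ih
      refine ⟨|c| * cg, by positivity, fun τ hτ => ?_⟩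
      rw [abs_mul, mul_assoc]
      exact mul_le_mul_of_nonneg_left (hcg τ hτ) (abs_nonneg c)
  | add hg hh ihg ihh =>
      obtain ⟨cg, hcg0, hcg⟩ := ihg
      obtain ⟨ch, hch0, hch⟩ := ihh
      refine ⟨cg + ch, by positivity, fun τ hτ => ?_⟩
      calc |_ + _| ≤ |_| + |_| := abs_add_le _ _
        _ ≤ cg * |deriv f τ| ^ _ + ch * |deriv f τ| ^ _ := add_le_add (hcg τ hτ) (hch τ hτ)
        _ = (cg + ch) * |deriv f τ| ^ _ := by ring
  | mul hg hh ihg ihh =>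
      obtain ⟨cg, hcg0, hcg⟩ := ihg
      obtain ⟨ch, hch0, hch⟩ := ihh
      refine ⟨cg * ch, by positivity, fun τ hτ => ?_⟩
      rw [abs_mul, pow_add]
      calc |_| * |_| ≤ (cg * |deriv f τ| ^ _) * (ch * |deriv f τ| ^ _) :=
            mul_le_mul (hcg τ hτ) (hch τ hτ) (abs_nonneg _) (by positivity)
        _ = cg * ch * (|deriv f τ| ^ _ * |deriv f τ| ^ _) := by ring
  | up hg ih =>
      obtain ⟨cg, hcg0, hcg⟩ := ih
      refine ⟨cg, hcg0, fun τ hτ => ?_⟩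
      calc |_| ≤ cg * |deriv f τ| ^ _ := hcg τ hτ
        _ ≤ cg * |deriv f τ| ^ (_ + 1) :=
            mul_le_mul_of_nonneg_left (pow_le_pow_right₀ (h1 τ hτ) (Nat.le_succ _)) hcg0
  | congr hg heq ih =>
      obtain ⟨cg, hcg0, hcg⟩ := ih
      exact ⟨cg, hcg0, fun τ hτ => (heq τ hτ) ▸ hcg τ hτ⟩

theorem Adm.deriv' {f : ℝ → ℝ} {b β C : ℝ} {Ω : Set ℝ} (hΩ : IsOpen Ω)
    (hf1 : ∀ τ ∈ Ω, DifferentiableAt ℝ f τ)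
    (hf2 : ∀ τ ∈ Ω, DifferentiableAt ℝ (deriv f) τ)
    (hode : ∀ τ ∈ Ω, deriv (deriv f) τ = β * Real.exp (-b * f τ) + C * Real.exp (2 * f τ))
    {k : ℕ} {g : ℝ → ℝ} (hg : Adm f b Ω k g) :
    (∀ τ ∈ Ω, DifferentiableAt ℝ g τ) ∧ Adm f b Ω (k + 1) (deriv g) := by
  induction hg with
  | e2 =>
      constructor
      · exact fun τ hτ => ((hf1 τ hτ).const_mul 2).exp
      · refine Adm.congr ((Adm.smul 2 (Adm.mul Adm.fp Adm.e2)).cast (by norm_num))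
          (fun τ hτ => ?_)
        have hd : HasDerivAt (fun s => Real.exp (2 * f s))
            (Real.exp (2 * f τ) * (2 * deriv f τ)) τ :=
          (((hf1 τ hτ).hasDerivAt).const_mul 2).exp
        rw [hd.deriv]; ring
  | em =>
      constructor
      · exact fun τ hτ => ((hf1 τ hτ).const_mul (-b)).exp
      · refine Adm.congr ((Adm.smul (-b) (Adm.mul Adm.fp Adm.em)).cast (by norm_num))
          (fun τ hτ => ?_)
        have hd : HasDerivAt (fun s => Real.exp (-b * f s))
            (Real.exp (-b * f τ) * (-b * deriv f τ)) τ :=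
          (((hf1 τ hτ).hasDerivAt).const_mul (-b)).exp
        rw [hd.deriv]; ring
  | fp =>
      constructor
      · exact hf2
      · exact Adm.congr (Adm.add (Adm.smul β Adm.em) (Adm.up (Adm.up (Adm.smul C Adm.e2))))
          (fun τ hτ => (hode τ hτ).symm)
  | one =>
      constructor
      · exact fun τ hτ => differentiableAt_const 1
      · refine Adm.congr ((Adm.smul 0 Adm.one).up) (fun τ hτ => ?_)
        simp
  | smul c hg ih =>
      refine ⟨fun τ hτ => (ih.1 τ hτ).const_mul c, ?_⟩
      refine Adm.congr (Adm.smul c ih.2) (fun τ hτ => ?_)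
      rw [deriv_const_mul c (ih.1 τ hτ)]
  | add hg hh ihg ihh =>
      refine ⟨fun τ hτ => (ihg.1 τ hτ).add (ihh.1 τ hτ), ?_⟩
      refine Adm.congr (Adm.add ihg.2 ihh.2) (fun τ hτ => ?_)
      rw [deriv_fun_add (ihg.1 τ hτ) (ihh.1 τ hτ)]
  | @mul k l g h hg hh ihg ihh =>
      refine ⟨fun τ hτ => (ihg.1 τ hτ).mul (ihh.1 τ hτ), ?_⟩
      have h1 : Adm f b Ω ((k + l) + 1) (fun τ => deriv g τ * h τ) :=
        (Adm.mul ihg.2 hh).cast (by omega)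
      have h2 : Adm f b Ω ((k + l) + 1) (fun τ => g τ * deriv h τ) :=
        (Adm.mul hg ihh.2).cast (by omega)
      refine Adm.congr (Adm.add h1 h2) (fun τ hτ => ?_)
      rw [deriv_fun_mul (ihg.1 τ hτ) (ihh.1 τ hτ)]
  | up hg ih =>
      exact ⟨ih.1, Adm.up ih.2⟩
  | congr hg heq ih =>
      have hev : ∀ τ ∈ Ω, ∀ᶠ s in nhds τ, _ = _ := fun τ hτ =>
        Filter.eventually_of_mem (hΩ.mem_nhds hτ) heq
      constructor
      · exact fun τ hτ => (ih.1 τ hτ).congr_of_eventuallyEq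
          (Filter.EventuallyEq.symm (hev τ hτ))
      · exact Adm.congr ih.2 (fun τ hτ => Filter.EventuallyEq.deriv_eq (hev τ hτ))
  
theorem Adm.iterate {f : ℝ → ℝ} {b β C : ℝ} {Ω : Set ℝ} (hΩ : IsOpen Ω)
    (hf1 : ∀ τ ∈ Ω, DifferentiableAt ℝ f τ)
    (hf2 : ∀ τ ∈ Ω, DifferentiableAt ℝ (deriv f) τ)
    (hode : ∀ τ ∈ Ω, deriv (deriv f) τ = β * Real.exp (-b * f τ) + C * Real.exp (2 * f τ))
    {k : ℕ} {g : ℝ → ℝ} (hg : Adm f b Ω k g) (j : ℕ) :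
    Adm f b Ω (k + j) (deriv^[j] g) := by
  induction j with
  | zero => exact hg
  | succ j ih =>
      rw [Function.iterate_succ_apply']
      exact (Adm.deriv' (β := β) (C := C) hΩ hf1 hf2 hode ih).2

end ARWAux

/-- `f` satisfies the ARW conditions with constant `γ > 0` and mass `mt > 0`:
`f'² e^{2γf} → mt` as `τ → 0⁻`, the limit of `f'' + γ f'²` exists, and the iterated
derivatives of `f'' + γ f'²` and of `f` of order `k ≥ 1` are bounded by `c_k |f'|^k`
near the singularity. -/
def ARWConds (γ mt : ℝ) (f : ℝ → ℝ) : Prop :=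
  Filter.Tendsto (fun τ => (deriv f τ) ^ 2 * Real.exp (2 * γ * f τ))
      (nhdsWithin 0 (Set.Iio 0)) (nhds mt)
  ∧ (∃ L : ℝ, Filter.Tendsto (fun τ => deriv (deriv f) τ + γ * (deriv f τ) ^ 2)
      (nhdsWithin 0 (Set.Iio 0)) (nhds L))
  ∧ ∃ δ : ℝ, 0 < δ ∧ ∀ k : ℕ, 1 ≤ k → ∃ c : ℝ,
      ∀ τ ∈ Set.Ioo (-δ) (0:ℝ),
        |iteratedDeriv k (fun s => deriv (deriv f) s + γ * (deriv f s) ^ 2) τ|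
            ≤ c * |deriv f τ| ^ k
        ∧ |iteratedDeriv k f τ| ≤ c * |deriv f τ| ^ k

set_option maxHeartbeats 2000000 in
/-- If `lam` vanishes on `(-∞, T]`, `ω₀ = 1` and `σ` is fine-tuned so that
`m + 2 (κ²/n²) σ ρ₀ = 0`, then every brane scale function satisfies
`f'² e^{2nf} → (κ²/n²) ρ₀²`, the identity
`f'' + n f'² = (2Λ/n) e^{2f} - n κt + (κ²/n²)(n+1) σ² e^{2f}` wherever `f ≤ T`, and
the ARW conditions with constant `γ = n` and mass `(κ²/n²) ρ₀²`. -/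
theorem arw_exceptional_gamma_sufficient
    (n : ℕ) (hn : 3 ≤ n)
    (m Λ κt κ σ ω₀ ρ₀ : ℝ)
    (hm : 0 < m) (hΛ : Λ ≤ 0)
    (hκt : κt = -1 ∨ κt = 0 ∨ κt = 1) (hΛκt : Λ = 0 → κt = 1)
    (hκ : κ ≠ 0) (hρ₀ : 0 < ρ₀)
    (lam μt : ℝ → ℝ)
    (hlam : ContDiff ℝ (⊤ : ℕ∞) lam)
    (hlam0 : Filter.Tendsto lam Filter.atBot (nhds 0))
    (hμt : ∀ t : ℝ, HasDerivAt μt (lam t) t)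
    (hμt0 : Filter.Tendsto μt Filter.atBot (nhds 0))
    (a : ℝ) (ha : 0 < a) (f : ℝ → ℝ)
    (hf : ContDiffOn ℝ (⊤ : ℕ∞) f (Set.Ioo (-a) 0))
    (hf' : ∀ τ ∈ Set.Ioo (-a) (0:ℝ), deriv f τ < 0)
    (hfb : Filter.Tendsto f (nhdsWithin 0 (Set.Iio 0)) Filter.atBot)
    (hFried : ∀ τ ∈ Set.Ioo (-a) (0:ℝ),
      (deriv f τ) ^ 2
        = m * Real.exp (-((n : ℝ) - 1) * f τ)
          + (2 * Λ / ((n : ℝ) * ((n : ℝ) + 1))) * Real.exp (2 * f τ) - κt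
          + (κ ^ 2 / (n : ℝ) ^ 2)
            * (σ + ρ₀ * Real.exp (-((n : ℝ) + ω₀) * f τ - μt (f τ))) ^ 2
            * Real.exp (2 * f τ))
    (T : ℝ) (hT : ∀ t ≤ T, lam t = 0)
    (hω₀ : ω₀ = 1)
    (hfine : m + 2 * (κ ^ 2 / (n : ℝ) ^ 2) * σ * ρ₀ = 0) :
    Filter.Tendsto (fun τ => (deriv f τ) ^ 2 * Real.exp (2 * (n : ℝ) * f τ))
        (nhdsWithin 0 (Set.Iio 0)) (nhds (κ ^ 2 / (n : ℝ) ^ 2 * ρ₀ ^ 2))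
      ∧ (∀ τ ∈ Set.Ioo (-a) (0:ℝ), f τ ≤ T →
          deriv (deriv f) τ + (n : ℝ) * (deriv f τ) ^ 2
            = 2 * Λ / (n : ℝ) * Real.exp (2 * f τ) - (n : ℝ) * κt
              + (κ ^ 2 / (n : ℝ) ^ 2) * ((n : ℝ) + 1) * σ ^ 2 * Real.exp (2 * f τ))
      ∧ ARWConds (n : ℝ) (κ ^ 2 / (n : ℝ) ^ 2 * ρ₀ ^ 2) f := by
  have hn0 : (0:ℝ) < (n:ℝ) := by
    have : 0 < n := by omega
    exact_mod_cast this
  have hnne : (n:ℝ) ≠ 0 := ne_of_gt hn0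
  have hn1ne : (n:ℝ) + 1 ≠ 0 := by positivity
  have hq0 : 0 < κ ^ 2 / (n:ℝ) ^ 2 := by positivity
  set q : ℝ := κ ^ 2 / (n:ℝ) ^ 2 with hqdef
  set mt : ℝ := q * ρ₀ ^ 2 with hmtdef
  have hmt : 0 < mt := by rw [hmtdef]; positivity
  set C : ℝ := 2 * Λ / ((n:ℝ) * ((n:ℝ) + 1)) + q * σ ^ 2 with hCdef
  -- μt vanishes on (-∞, T]
  have hμconst : ∀ t ≤ T, μt T = μt t := by
    intro t ht
    have h := constant_of_has_deriv_right_zero (f := μt) (a := t) (b := T)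
      (fun x _ => (hμt x).continuousAt.continuousWithinAt)
      (fun x hx => by
        have h0 := hμt x
        rw [hT x (le_of_lt hx.2)] at h0
        exact h0.hasDerivWithinAt)
    exact h T ⟨ht, le_refl T⟩
  have hμ0 : ∀ t ≤ T, μt t = 0 := by
    have heq : μt =ᶠ[Filter.atBot] fun _ => μt T := by
      filter_upwards [Filter.eventually_le_atBot T] with s hs using (hμconst s hs).symm
    have hlim : Filter.Tendsto (fun _ : ℝ => μt T) Filter.atBot (nhds 0) :=
      Filter.Tendsto.congr' heq hμt0
    have hT0 : μt T = 0 := tendsto_nhds_unique tendsto_const_nhds hlim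
    intro t ht
    rw [← hμconst t ht, hT0]
  -- Reduced Friedmann equation
  have hRF : ∀ τ ∈ Set.Ioo (-a) (0:ℝ), f τ ≤ T →
      (deriv f τ) ^ 2
        = mt * Real.exp (-(2*(n:ℝ)) * f τ) + C * Real.exp (2 * f τ) - κt := by
    intro τ hτ hfT
    have h := hFried τ hτ
    rw [hω₀, hμ0 (f τ) hfT] at h
    have hPB : Real.exp (-((n:ℝ) + 1) * f τ - 0) * Real.exp (2 * f τ)
        = Real.exp (-((n:ℝ) - 1) * f τ) := by
      rw [← Real.exp_add]; congr 1; ring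
    have hP2B : Real.exp (-((n:ℝ) + 1) * f τ - 0) ^ 2 * Real.exp (2 * f τ)
        = Real.exp (-(2*(n:ℝ)) * f τ) := by
      rw [sq, ← Real.exp_add, ← Real.exp_add]; congr 1; ring
    rw [hmtdef, hCdef]
    linear_combination h + Real.exp (-((n:ℝ) - 1) * f τ) * hfine
      + 2 * q * σ * ρ₀ * hPB + q * ρ₀ ^ 2 * hP2B
  -- smoothness facts
  have hcf : ContinuousOn f (Set.Ioo (-a) 0) := hf.continuousOn
  have hfd1 : ContDiffOn ℝ (⊤:ℕ∞) (deriv f) (Set.Ioo (-a) 0) :=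
    hf.deriv_of_isOpen isOpen_Ioo (by simp)
  have hfd2 : ContDiffOn ℝ (⊤:ℕ∞) (deriv (deriv f)) (Set.Ioo (-a) 0) :=
    hfd1.deriv_of_isOpen isOpen_Ioo (by simp)
  have hdiff_f : ∀ τ ∈ Set.Ioo (-a) (0:ℝ), DifferentiableAt ℝ f τ := fun τ hτ =>
    (hf.contDiffAt (isOpen_Ioo.mem_nhds hτ)).differentiableAt (by simp)
  have hdiff_f' : ∀ τ ∈ Set.Ioo (-a) (0:ℝ), DifferentiableAt ℝ (deriv f) τ := fun τ hτ =>
    (hfd1.contDiffAt (isOpen_Ioo.mem_nhds hτ)).differentiableAt (by simp)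
  -- the second-order ODE, wherever the reduced Friedmann equation holds near a point
  have hODE : ∀ τ ∈ Set.Ioo (-a) (0:ℝ),
      (∀ᶠ s in nhds τ, s ∈ Set.Ioo (-a) (0:ℝ) ∧ f s ≤ T) →
      deriv (deriv f) τ
        = -(n:ℝ) * mt * Real.exp (-(2*(n:ℝ)) * f τ) + C * Real.exp (2 * f τ) := by
    intro τ hτ hev
    have hd1 : HasDerivAt f (deriv f τ) τ := (hdiff_f τ hτ).hasDerivAt
    have hd2 : HasDerivAt (deriv f) (deriv (deriv f) τ) τ := (hdiff_f' τ hτ).hasDerivAt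
    have hL : HasDerivAt (fun s => (deriv f s) ^ 2)
        ((2:ℕ) * (deriv f τ) ^ 1 * deriv (deriv f) τ) τ := hd2.pow 2
    have h1 : HasDerivAt (fun s => Real.exp (-(2*(n:ℝ)) * f s))
        (Real.exp (-(2*(n:ℝ)) * f τ) * (-(2*(n:ℝ)) * deriv f τ)) τ :=
      (hd1.const_mul _).exp
    have h2 : HasDerivAt (fun s => Real.exp (2 * f s))
        (Real.exp (2 * f τ) * (2 * deriv f τ)) τ :=
      (hd1.const_mul _).exp
    have hR : HasDerivAt
        (fun s => mt * Real.exp (-(2*(n:ℝ)) * f s) + C * Real.exp (2 * f s) - κt)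
        (mt * (Real.exp (-(2*(n:ℝ)) * f τ) * (-(2*(n:ℝ)) * deriv f τ))
          + C * (Real.exp (2 * f τ) * (2 * deriv f τ))) τ :=
      ((h1.const_mul mt).add (h2.const_mul C)).sub_const κt
    have hLR : HasDerivAt (fun s => (deriv f s) ^ 2)
        (mt * (Real.exp (-(2*(n:ℝ)) * f τ) * (-(2*(n:ℝ)) * deriv f τ))
          + C * (Real.exp (2 * f τ) * (2 * deriv f τ))) τ := by
      refine hR.congr_of_eventuallyEq ?_
      filter_upwards [hev] with s hs using hRF s hs.1 hs.2
    have heq := hL.unique hLR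
    have hne : (2:ℝ) * deriv f τ ≠ 0 := mul_ne_zero two_ne_zero (ne_of_lt (hf' τ hτ))
    apply mul_left_cancel₀ hne
    push_cast at heq
    linear_combination heq
  -- threshold constants
  have hR0 : (0:ℝ) < 1 + |C| + |κt| := by positivity
  set R : ℝ := 1 + |C| + |κt| with hRdef
  set T' : ℝ := min (min T 0) (-(Real.log (R / mt)) / (2 * (n:ℝ))) with hT'def
  have hT'T : T' ≤ T := le_trans (min_le_left _ _) (min_le_left _ _)
  have hT'0 : T' ≤ 0 := le_trans (min_le_left _ _) (min_le_right _ _)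
  have hQbig : ∀ x ≤ T', R ≤ mt * Real.exp (-(2*(n:ℝ)) * x) := by
    intro x hx
    have h3 : (0:ℝ) < 2 * (n:ℝ) := by positivity
    have h2 : x ≤ -(Real.log (R / mt)) / (2 * (n:ℝ)) :=
      le_trans hx (min_le_right _ _)
    have h4 : x * (2 * (n:ℝ)) ≤ -(Real.log (R / mt)) := (le_div_iff₀ h3).mp h2
    have h1 : Real.log (R / mt) ≤ -(2*(n:ℝ)) * x := by nlinarith
    have h5 : (0:ℝ) < R / mt := div_pos hR0 hmt
    have h6 : R / mt ≤ Real.exp (-(2*(n:ℝ)) * x) := by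
      calc R / mt = Real.exp (Real.log (R / mt)) := (Real.exp_log h5).symm
        _ ≤ _ := Real.exp_le_exp.mpr h1
    calc R = mt * (R / mt) := by field_simp
      _ ≤ mt * Real.exp (-(2*(n:ℝ)) * x) := mul_le_mul_of_nonneg_left h6 hmt.le
  -- pointwise consequences on the region f ≤ T'
  have hreg : ∀ τ ∈ Set.Ioo (-a) (0:ℝ), f τ ≤ T' →
      1 ≤ |deriv f τ| ∧ Real.exp (-(2*(n:ℝ)) * f τ) ≤ R / mt * (deriv f τ) ^ 2
        ∧ Real.exp (2 * f τ) ≤ 1 := by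
    intro τ hτ hfT'
    have hrf := hRF τ hτ (le_trans hfT' hT'T)
    have hB1 : Real.exp (2 * f τ) ≤ 1 := by
      rw [Real.exp_le_one_iff]
      have := le_trans hfT' hT'0
      linarith
    have hQb := hQbig (f τ) hfT'
    have hBpos := Real.exp_pos (2 * f τ)
    have hQpos := Real.exp_pos (-(2*(n:ℝ)) * f τ)
    have hC1 : -|C| ≤ C := neg_abs_le C
    have hC2 : C ≤ |C| := le_abs_self C
    have hk1 : -|κt| ≤ κt := neg_abs_le κt
    have hk2 : κt ≤ |κt| := le_abs_self κt
    have hCn : (0:ℝ) ≤ |C| := abs_nonneg C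
    have hkn : (0:ℝ) ≤ |κt| := abs_nonneg κt
    have hRR : R = 1 + |C| + |κt| := hRdef
    have hCB : -|C| ≤ C * Real.exp (2 * f τ) := by
      have h1 : -|C| * Real.exp (2 * f τ) ≤ C * Real.exp (2 * f τ) :=
        mul_le_mul_of_nonneg_right hC1 hBpos.le
      nlinarith [mul_nonneg hCn (sub_nonneg.mpr hB1)]
    have hsq : 1 ≤ (deriv f τ) ^ 2 := by linarith [hrf, hQb, hCB, hk2]
    have hCB2 : -(C * Real.exp (2 * f τ)) ≤ |C| := by
      have h1 : C * Real.exp (2 * f τ) ≤ |C| * Real.exp (2 * f τ) :=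
        mul_le_mul_of_nonneg_right hC2 hBpos.le
      nlinarith [mul_nonneg hCn (sub_nonneg.mpr hB1)]
    refine ⟨?_, ?_, hB1⟩
    · nlinarith [abs_nonneg (deriv f τ), sq_abs (deriv f τ)]
    · rw [div_mul_eq_mul_div, le_div_iff₀ hmt]
      have h7 : |C| + |κt| ≤ (|C| + |κt|) * (deriv f τ) ^ 2 := by
        nlinarith [mul_nonneg (add_nonneg hCn hkn) (sub_nonneg.mpr hsq)]
      nlinarith [hrf, hCB2, hk1, h7]
  -- choose δ
  obtain ⟨l, hl, hlsub⟩ : ∃ l ∈ Set.Iio (0:ℝ), Set.Ioo l 0 ⊆ {τ : ℝ | f τ ≤ T'} :=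
    mem_nhdsLT_iff_exists_Ioo_subset.mp
      (hfb.eventually (Filter.eventually_le_atBot T'))
  have hl0 : l < 0 := hl
  set δ : ℝ := min (-l) a with hδdef
  have hδ : 0 < δ := lt_min (by linarith) ha
  have hδa : δ ≤ a := min_le_right _ _
  have hlδ : l ≤ -δ := by
    have := min_le_left (-l) a
    linarith
  have hΩsub : Set.Ioo (-δ) (0:ℝ) ⊆ Set.Ioo (-a) 0 :=
    Set.Ioo_subset_Ioo (by linarith) le_rfl
  have hΩT' : ∀ τ ∈ Set.Ioo (-δ) (0:ℝ), f τ ≤ T' := fun τ hτ =>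
    hlsub ⟨lt_of_le_of_lt hlδ hτ.1, hτ.2⟩
  have hΩmem : Set.Ioo (-δ) (0:ℝ) ∈ nhdsWithin (0:ℝ) (Set.Iio 0) :=
    Ioo_mem_nhdsLT (by linarith)
  -- ODE on Ω
  have hodeΩ : ∀ τ ∈ Set.Ioo (-δ) (0:ℝ),
      deriv (deriv f) τ
        = -(n:ℝ) * mt * Real.exp (-(2*(n:ℝ)) * f τ) + C * Real.exp (2 * f τ) := by
    intro τ hτ
    refine hODE τ (hΩsub hτ) ?_
    filter_upwards [isOpen_Ioo.mem_nhds hτ] with s hs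
    exact ⟨hΩsub hs, le_trans (hΩT' s hs) hT'T⟩
  -- limits of exponentials
  have hexp0 : ∀ c : ℝ, 0 < c →
      Filter.Tendsto (fun τ => Real.exp (c * f τ)) (nhdsWithin 0 (Set.Iio 0)) (nhds 0) :=
    fun c hc => Real.tendsto_exp_atBot.comp (hfb.const_mul_atBot hc)
  -- first bullet
  have hb1 : Filter.Tendsto (fun τ => (deriv f τ) ^ 2 * Real.exp (2 * (n:ℝ) * f τ))
      (nhdsWithin 0 (Set.Iio 0)) (nhds mt) := by
    have h1 := (hexp0 (2*(n:ℝ)+2) (by positivity)).const_mul C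
    have h2 := (hexp0 (2*(n:ℝ)) (by positivity)).const_mul κt
    have hlim : Filter.Tendsto
        (fun τ => mt + C * Real.exp ((2*(n:ℝ)+2) * f τ) - κt * Real.exp (2*(n:ℝ) * f τ))
        (nhdsWithin 0 (Set.Iio 0)) (nhds mt) := by
      have hc : Filter.Tendsto (fun _ : ℝ => mt) (nhdsWithin (0:ℝ) (Set.Iio 0)) (nhds mt) :=
        tendsto_const_nhds
      have := (hc.add h1).sub h2
      simpa using this
    refine Filter.Tendsto.congr' ?_ hlim
    filter_upwards [hΩmem] with τ hτ
    have hrf := hRF τ (hΩsub hτ) (le_trans (hΩT' τ hτ) hT'T)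
    have e1 : Real.exp (-(2*(n:ℝ)) * f τ) * Real.exp (2*(n:ℝ) * f τ) = 1 := by
      rw [← Real.exp_add, show -(2*(n:ℝ)) * f τ + 2*(n:ℝ) * f τ = 0 by ring, Real.exp_zero]
    have e2 : Real.exp (2 * f τ) * Real.exp (2*(n:ℝ) * f τ)
        = Real.exp ((2*(n:ℝ)+2) * f τ) := by
      rw [← Real.exp_add]; congr 1; ring
    linear_combination (-(Real.exp (2*(n:ℝ) * f τ))) * hrf - mt * e1 - C * e2
  -- second bullet
  have hBul2 : ∀ τ ∈ Set.Ioo (-a) (0:ℝ), f τ ≤ T →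
      deriv (deriv f) τ + (n:ℝ) * (deriv f τ) ^ 2
        = 2 * Λ / (n:ℝ) * Real.exp (2 * f τ) - (n:ℝ) * κt
          + q * ((n:ℝ) + 1) * σ ^ 2 * Real.exp (2 * f τ) := by
    have hD : 2 * Λ / ((n:ℝ) * ((n:ℝ) + 1)) * ((n:ℝ) + 1) = 2 * Λ / (n:ℝ) := by
      field_simp
    have key : ∀ s ∈ Set.Ioo (-a) (0:ℝ), f s < T →
        deriv (deriv f) s + (n:ℝ) * (deriv f s) ^ 2
          = 2 * Λ / (n:ℝ) * Real.exp (2 * f s) - (n:ℝ) * κt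
            + q * ((n:ℝ) + 1) * σ ^ 2 * Real.exp (2 * f s) := by
      intro s hs hsT
      have hU : IsOpen (Set.Ioo (-a) 0 ∩ f ⁻¹' Set.Iio T) :=
        hcf.isOpen_inter_preimage isOpen_Ioo isOpen_Iio
      have hode := hODE s hs (by
        filter_upwards [hU.mem_nhds ⟨hs, hsT⟩] with x hx
        exact ⟨hx.1, le_of_lt hx.2⟩)
      have hrf := hRF s hs (le_of_lt hsT)
      rw [hCdef] at hode hrf
      linear_combination hode + (n:ℝ) * hrf + Real.exp (2 * f s) * hD
    intro τ hτ hfT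
    rcases lt_or_eq_of_le hfT with hlt | heqT
    · exact key τ hτ hlt
    · have hanti : StrictAntiOn f (Set.Ioo (-a) 0) :=
        strictAntiOn_of_deriv_neg (convex_Ioo _ _) hcf
          (fun x hx => hf' x (by rwa [interior_Ioo] at hx))
      have hτ0 : τ < 0 := hτ.2
      have hsubU : ∀ s ∈ Set.Ioo τ (0:ℝ), s ∈ Set.Ioo (-a) (0:ℝ) ∧ f s < T := by
        intro s hs
        have hs' : s ∈ Set.Ioo (-a) (0:ℝ) := ⟨lt_trans hτ.1 hs.1, hs.2⟩
        refine ⟨hs', ?_⟩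
        rw [← heqT]
        exact hanti hτ hs' hs.1
      have hmem : Set.Ioo τ (0:ℝ) ∈ nhdsWithin τ (Set.Ioi τ) :=
        Ioo_mem_nhdsGT hτ0
      have h1c : ContinuousAt (deriv (deriv f)) τ :=
        hfd2.continuousOn.continuousAt (isOpen_Ioo.mem_nhds hτ)
      have h2c : ContinuousAt (deriv f) τ :=
        hfd1.continuousOn.continuousAt (isOpen_Ioo.mem_nhds hτ)
      have hfc : ContinuousAt f τ := hcf.continuousAt (isOpen_Ioo.mem_nhds hτ)
      have hec : ContinuousAt (fun s => Real.exp (2 * f s)) τ :=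
        (continuousAt_const.mul hfc).rexp
      have hcont1 : ContinuousAt (fun s => deriv (deriv f) s + (n:ℝ) * (deriv f s) ^ 2) τ :=
        h1c.add (continuousAt_const.mul (h2c.pow 2))
      have hcont2 : ContinuousAt (fun s =>
          2 * Λ / (n:ℝ) * Real.exp (2 * f s) - (n:ℝ) * κt
            + q * ((n:ℝ) + 1) * σ ^ 2 * Real.exp (2 * f s)) τ :=
        ((continuousAt_const.mul hec).sub continuousAt_const).add (continuousAt_const.mul hec)
      have t1 : Filter.Tendsto (fun s => deriv (deriv f) s + (n:ℝ) * (deriv f s) ^ 2)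
          (nhdsWithin τ (Set.Ioi τ))
          (nhds (deriv (deriv f) τ + (n:ℝ) * (deriv f τ) ^ 2)) :=
        hcont1.continuousWithinAt
      have t2 : Filter.Tendsto (fun s =>
          2 * Λ / (n:ℝ) * Real.exp (2 * f s) - (n:ℝ) * κt
            + q * ((n:ℝ) + 1) * σ ^ 2 * Real.exp (2 * f s))
          (nhdsWithin τ (Set.Ioi τ))
          (nhds (2 * Λ / (n:ℝ) * Real.exp (2 * f τ) - (n:ℝ) * κt
            + q * ((n:ℝ) + 1) * σ ^ 2 * Real.exp (2 * f τ))) :=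
        hcont2.continuousWithinAt
      have t2' : Filter.Tendsto (fun s => deriv (deriv f) s + (n:ℝ) * (deriv f s) ^ 2)
          (nhdsWithin τ (Set.Ioi τ))
          (nhds (2 * Λ / (n:ℝ) * Real.exp (2 * f τ) - (n:ℝ) * κt
            + q * ((n:ℝ) + 1) * σ ^ 2 * Real.exp (2 * f τ))) := by
        refine Filter.Tendsto.congr' ?_ t2
        filter_upwards [hmem] with s hs
        exact (key s (hsubU s hs).1 (hsubU s hs).2).symm
      exact tendsto_nhds_unique t1 t2'
  -- the limit for the second ARW condition
  have hL : Filter.Tendsto (fun τ => deriv (deriv f) τ + (n:ℝ) * (deriv f τ) ^ 2)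
      (nhdsWithin 0 (Set.Iio 0)) (nhds (-(n:ℝ) * κt)) := by
    have h1 := (hexp0 2 (by norm_num)).const_mul (((n:ℝ)+1) * C)
    have hlim : Filter.Tendsto (fun τ => ((n:ℝ)+1) * C * Real.exp (2 * f τ) + -(n:ℝ) * κt)
        (nhdsWithin 0 (Set.Iio 0)) (nhds (-(n:ℝ) * κt)) := by
      have hc : Filter.Tendsto (fun _ : ℝ => -(n:ℝ) * κt) (nhdsWithin (0:ℝ) (Set.Iio 0))
          (nhds (-(n:ℝ) * κt)) := tendsto_const_nhds
      have := h1.add hc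
      simpa using this
    refine Filter.Tendsto.congr' ?_ hlim
    filter_upwards [hΩmem] with τ hτ
    have hode := hodeΩ τ hτ
    have hrf := hRF τ (hΩsub hτ) (le_trans (hΩT' τ hτ) hT'T)
    linear_combination -hode - (n:ℝ) * hrf
  -- the derivative bounds
  have hK0 : (0:ℝ) ≤ R / mt := le_of_lt (div_pos hR0 hmt)
  have hregΩ : ∀ τ ∈ Set.Ioo (-δ) (0:ℝ),
      1 ≤ |deriv f τ| ∧ Real.exp (-(2*(n:ℝ)) * f τ) ≤ R / mt * (deriv f τ) ^ 2
        ∧ Real.exp (2 * f τ) ≤ 1 :=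
    fun τ hτ => hreg τ (hΩsub hτ) (hΩT' τ hτ)
  have hdiff1Ω : ∀ τ ∈ Set.Ioo (-δ) (0:ℝ), DifferentiableAt ℝ f τ :=
    fun τ hτ => hdiff_f τ (hΩsub hτ)
  have hdiff2Ω : ∀ τ ∈ Set.Ioo (-δ) (0:ℝ), DifferentiableAt ℝ (deriv f) τ :=
    fun τ hτ => hdiff_f' τ (hΩsub hτ)
  have hAdm_h : ARWAux.Adm f (2*(n:ℝ)) (Set.Ioo (-δ) 0) 0
      (fun s => deriv (deriv f) s + (n:ℝ) * (deriv f s) ^ 2) := by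
    refine ARWAux.Adm.congr
      (ARWAux.Adm.add (ARWAux.Adm.smul (((n:ℝ)+1)*C) ARWAux.Adm.e2)
        (ARWAux.Adm.smul (-(n:ℝ)*κt) ARWAux.Adm.one)) (fun τ hτ => ?_)
    have hode := hodeΩ τ hτ
    have hrf := hRF τ (hΩsub hτ) (le_trans (hΩT' τ hτ) hT'T)
    linear_combination -hode - (n:ℝ) * hrf
  have hbound : ∀ {k : ℕ} {g : ℝ → ℝ}, ARWAux.Adm f (2*(n:ℝ)) (Set.Ioo (-δ) 0) k g →
      ∃ c : ℝ, 0 ≤ c ∧ ∀ τ ∈ Set.Ioo (-δ) (0:ℝ), |g τ| ≤ c * |deriv f τ| ^ k :=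
    fun hg => ARWAux.Adm.bound hK0 (fun τ hτ => (hregΩ τ hτ).2.1)
      (fun τ hτ => (hregΩ τ hτ).1) (fun τ hτ => (hregΩ τ hτ).2.2) hg
  have hiter : ∀ {k : ℕ} {g : ℝ → ℝ}, ARWAux.Adm f (2*(n:ℝ)) (Set.Ioo (-δ) 0) k g →
      ∀ j : ℕ, ARWAux.Adm f (2*(n:ℝ)) (Set.Ioo (-δ) 0) (k + j) (deriv^[j] g) :=
    fun hg j => ARWAux.Adm.iterate (β := -(n:ℝ)*mt) (C := C) isOpen_Ioo
      hdiff1Ω hdiff2Ω hodeΩ hg j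
  refine ⟨hb1, hBul2, hb1, ⟨-(n:ℝ) * κt, hL⟩, δ, hδ, ?_⟩
  intro k hk
  obtain ⟨j, rfl⟩ : ∃ j, k = j + 1 := ⟨k - 1, by omega⟩
  obtain ⟨c1, hc10, hc1⟩ := hbound ((hiter hAdm_h (j + 1)).cast (show 0 + (j+1) = j+1 by omega))
  obtain ⟨c2, hc20, hc2⟩ := hbound ((hiter ARWAux.Adm.fp j).cast (show 1 + j = j+1 by omega))
  refine ⟨max c1 c2, fun τ hτ => ⟨?_, ?_⟩⟩
  · rw [iteratedDeriv_eq_iterate]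
    calc |deriv^[j+1] (fun s => deriv (deriv f) s + (n:ℝ) * (deriv f s) ^ 2) τ|
        ≤ c1 * |deriv f τ| ^ (j+1) := hc1 τ hτ
      _ ≤ max c1 c2 * |deriv f τ| ^ (j+1) :=
          mul_le_mul_of_nonneg_right (le_max_left _ _) (by positivity)
  · rw [iteratedDeriv_eq_iterate, Function.iterate_succ_apply]
    calc |deriv^[j] (deriv f) τ| ≤ c2 * |deriv f τ| ^ (j+1) := hc2 τ hτ
      _ ≤ max c1 c2 * |deriv f τ| ^ (j+1) :=
          mul_le_mul_of_nonneg_right (le_max_right _ _) (by positivity)
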